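/- Let P be a finite poset and q a positive integer. For every f ∈ Inc_q(P), Bender-Knuth promotion equals jeu de taquin promotion: Pro(f) = JdtPro(f). -/

import Mathlib

/-- `Inc_q(P)`: increasing labelings of `P` with labels in `{1,…,q}`. -/
def IncQ {P : Type*} [PartialOrder P] (q : ℕ) (f : P → ℤ) : Prop :=
  (∀ p, 1 ≤ f p ∧ f p ≤ (q : ℤ)) ∧ ∀ ⦃p₁ p₂ : P⦄, p₁ < p₂ → f p₁ < f p₂

open Classical in
/-- The `i`-th Bender-Knuth involution on `Inc_q(P)`: change a label `i` to
`i+1`, and a label `i+1` to `i`, wherever possible. -/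
noncomputable def bkQ {P : Type*} [PartialOrder P] [DecidableEq P] (q : ℕ) (i : ℤ)
    (f : P → ℤ) : P → ℤ := fun p =>
  if f p = i ∧ IncQ q (Function.update f p (i + 1)) then i + 1
  else if f p = i + 1 ∧ IncQ q (Function.update f p i) then i
  else f p

/-- Bender-Knuth promotion `Pro = ρ_{q−1} ∘ ⋯ ∘ ρ₂ ∘ ρ₁` on `Inc_q(P)`. -/
noncomputable def proQ {P : Type*} [PartialOrder P] [DecidableEq P] (q : ℕ)
    (f : P → ℤ) : P → ℤ :=
  (List.range (q - 1)).foldl (fun g j => bkQ q ((j : ℤ) + 1) g) f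

open Classical in
/-- The `i`-th jeu de taquin slide on labelings `P → ℤ ∪ {□}`, with `□`
encoded by `none`: an empty label becomes `i` if some cover is labeled `i`,
and a label `i` becomes empty if some element covered is empty. -/
noncomputable def slideQ {P : Type*} [PartialOrder P] (i : ℤ)
    (g : P → Option ℤ) : P → Option ℤ := fun x =>
  if g x = none ∧ ∃ y, x ⋖ y ∧ g y = some i then some i
  else if g x = some i ∧ ∃ z, z ⋖ x ∧ g z = none then none
  else g x

/-- Jeu de taquin promotion: replace all labels `1` by `□`, apply the slides
`σ₂, …, σ_q` in order, replace all `□` by `q+1`, then subtract `1`. -/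
noncomputable def jdtProQ {P : Type*} [PartialOrder P] [DecidableEq P] (q : ℕ)
    (f : P → ℤ) : P → ℤ := fun x =>
  (((List.range (q - 1)).foldl (fun g j => slideQ ((j : ℤ) + 2) g)
      (fun y => if f y = 1 then none else some (f y))) x).getD ((q : ℤ) + 1) - 1

section Aux
variable {P : Type*} [PartialOrder P] [DecidableEq P]

omit [DecidableEq P] in
lemma covLem {g : P → ℤ} (hg : ∀ ⦃p₁ p₂ : P⦄, p₁ < p₂ → g p₁ < g p₂)
    {i : ℤ} {x y : P} (hxy : x < y) (hx : g x = i) (hy : g y = i + 1) : x ⋖ y :=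
  ⟨hxy, fun z hz hz' => by have h1 := hg hz; have h2 := hg hz'; omega⟩

lemma up_iff (q : ℕ) {g : P → ℤ} (hg : IncQ q g) {i : ℤ} (hi : 1 ≤ i)
    (hiq : i + 1 ≤ (q : ℤ)) {p : P} (hp : g p = i) :
    IncQ q (Function.update g p (i + 1)) ↔ ¬∃ y, p ⋖ y ∧ g y = i + 1 := by
  constructor
  · rintro h ⟨y, hcov, hy⟩
    have hne : y ≠ p := fun e => absurd (e ▸ hcov.1) (lt_irrefl p)
    have h2 := h.2 hcov.1
    rw [Function.update_self, Function.update_of_ne hne] at h2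
    omega
  · intro h
    refine ⟨fun x => ?_, fun p₁ p₂ h12 => ?_⟩
    · rcases eq_or_ne x p with rfl | hne
      · rw [Function.update_self]; omega
      · rw [Function.update_of_ne hne]; exact hg.1 x
    · rw [Function.update_apply, Function.update_apply]
      have hlt := hg.2 h12
      split_ifs with h1 h2 h2
      · rw [h1, h2] at h12; exact absurd h12 (lt_irrefl p)
      · have hx : g p₁ = i := by rw [h1, hp]
        have hne2 : g p₂ ≠ i + 1 := fun he =>
          h ⟨p₂, covLem hg.2 (h1 ▸ h12 : p < p₂) hp he, he⟩
        omega
      · have hx : g p₂ = i := by rw [h2, hp]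
        omega
      · exact hlt

lemma down_iff (q : ℕ) {g : P → ℤ} (hg : IncQ q g) {i : ℤ} (hi : 1 ≤ i)
    (hiq : i + 1 ≤ (q : ℤ)) {p : P} (hp : g p = i + 1) :
    IncQ q (Function.update g p i) ↔ ¬∃ z, z ⋖ p ∧ g z = i := by
  constructor
  · rintro h ⟨z, hcov, hz⟩
    have hne : z ≠ p := fun e => absurd (e ▸ hcov.1) (lt_irrefl p)
    have h2 := h.2 hcov.1
    rw [Function.update_self, Function.update_of_ne hne] at h2
    omega
  · intro h
    refine ⟨fun x => ?_, fun p₁ p₂ h12 => ?_⟩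
    · rcases eq_or_ne x p with rfl | hne
      · rw [Function.update_self]; omega
      · rw [Function.update_of_ne hne]; exact hg.1 x
    · rw [Function.update_apply, Function.update_apply]
      have hlt := hg.2 h12
      split_ifs with h1 h2 h2
      · rw [h1, h2] at h12; exact absurd h12 (lt_irrefl p)
      · have hx : g p₁ = i + 1 := by rw [h1, hp]
        omega
      · have hx : g p₂ = i + 1 := by rw [h2, hp]
        have hne2 : g p₁ ≠ i := fun he =>
          h ⟨p₁, covLem hg.2 (h2 ▸ h12 : p₁ < p) he hp, he⟩
        omega
      · exact hlt

lemma bk_cases (q : ℕ) {g : P → ℤ} (hg : IncQ q g) {i : ℤ} (hi : 1 ≤ i)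
    (hiq : i + 1 ≤ (q : ℤ)) (p : P) :
    (g p ≠ i ∧ g p ≠ i + 1 ∧ bkQ q i g p = g p) ∨
    (g p = i ∧ (∃ y, p ⋖ y ∧ g y = i + 1) ∧ bkQ q i g p = i) ∨
    (g p = i ∧ ¬(∃ y, p ⋖ y ∧ g y = i + 1) ∧ bkQ q i g p = i + 1) ∨
    (g p = i + 1 ∧ (∃ z, z ⋖ p ∧ g z = i) ∧ bkQ q i g p = i + 1) ∨
    (g p = i + 1 ∧ ¬(∃ z, z ⋖ p ∧ g z = i) ∧ bkQ q i g p = i) := by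
  by_cases h1 : g p = i
  · by_cases h2 : ∃ y, p ⋖ y ∧ g y = i + 1
    · refine Or.inr (Or.inl ⟨h1, h2, ?_⟩)
      unfold bkQ
      rw [if_neg (fun hc => (up_iff q hg hi hiq h1).mp hc.2 h2),
        if_neg (fun hc => by have := hc.1; omega)]
      exact h1
    · refine Or.inr (Or.inr (Or.inl ⟨h1, h2, ?_⟩))
      unfold bkQ
      rw [if_pos ⟨h1, (up_iff q hg hi hiq h1).mpr h2⟩]
  · by_cases h1' : g p = i + 1
    · by_cases h2 : ∃ z, z ⋖ p ∧ g z = i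
      · refine Or.inr (Or.inr (Or.inr (Or.inl ⟨h1', h2, ?_⟩)))
        unfold bkQ
        rw [if_neg (fun hc => h1 hc.1),
          if_neg (fun hc => (down_iff q hg hi hiq h1').mp hc.2 h2)]
        exact h1'
      · refine Or.inr (Or.inr (Or.inr (Or.inr ⟨h1', h2, ?_⟩)))
        unfold bkQ
        rw [if_neg (fun hc => h1 hc.1),
          if_pos ⟨h1', (down_iff q hg hi hiq h1').mpr h2⟩]
    · refine Or.inl ⟨h1, h1', ?_⟩
      unfold bkQ
      rw [if_neg (fun hc => h1 hc.1), if_neg (fun hc => h1' hc.1)]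

lemma bk_incq (q : ℕ) {g : P → ℤ} (hg : IncQ q g) {i : ℤ} (hi : 1 ≤ i)
    (hiq : i + 1 ≤ (q : ℤ)) : IncQ q (bkQ q i g) := by
  constructor
  · intro p
    have hb := hg.1 p
    rcases bk_cases q hg hi hiq p with ⟨_, _, h⟩|⟨_, _, h⟩|⟨_, _, h⟩|⟨_, _, h⟩|⟨_, _, h⟩ <;>
      rw [h] <;> omega
  · intro p₁ p₂ h12
    have hlt := hg.2 h12
    rcases bk_cases q hg hi hiq p₁ with ⟨ha1, ha2, ha3⟩|⟨ha1, ha2, ha3⟩|⟨ha1, ha2, ha3⟩|⟨ha1, ha2, ha3⟩|⟨ha1, ha2, ha3⟩ <;>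
      rcases bk_cases q hg hi hiq p₂ with ⟨hb1, hb2, hb3⟩|⟨hb1, hb2, hb3⟩|⟨hb1, hb2, hb3⟩|⟨hb1, hb2, hb3⟩|⟨hb1, hb2, hb3⟩ <;>
      rw [ha3, hb3] <;>
      try omega
    all_goals exfalso
    all_goals first
      | exact hb2 ⟨p₁, covLem hg.2 h12 ha1 hb1, ha1⟩
      | exact ha2 ⟨p₂, covLem hg.2 h12 ha1 hb1, hb1⟩

end Aux

section Aux2
variable {P : Type*} [PartialOrder P] [DecidableEq P]

def encode (k v : ℤ) : Option ℤ :=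
  if v = k + 1 then none else if v < k + 1 then some (v + 1) else some v

lemma encode_none {k v : ℤ} : encode k v = none ↔ v = k + 1 := by
  unfold encode; split_ifs <;> simp_all

lemma encode_some2 {k v : ℤ} : encode k v = some (k + 2) ↔ v = k + 2 := by
  unfold encode; split_ifs <;> simp <;> omega

lemma encode_eq_none {k v : ℤ} (h : v = k + 1) : encode k v = none := by
  unfold encode; rw [if_pos h]

lemma encode_lt {k v : ℤ} (h : v < k + 1) : encode k v = some (v + 1) := by
  unfold encode; rw [if_neg (by omega), if_pos h]

lemma encode_gt {k v : ℤ} (h : k + 1 < v) : encode k v = some v := by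
  unfold encode; rw [if_neg (by omega), if_neg (by omega)]

lemma encode_shift {k v : ℤ} (h1 : v ≠ k + 1) (h2 : v ≠ k + 2) :
    encode k v = encode (k + 1) v := by
  unfold encode; split_ifs <;> first | rfl | omega | (exfalso; omega)

lemma slide_step (q : ℕ) {g : P → ℤ} (hg : IncQ q g) (k : ℤ) (hk : 0 ≤ k)
    (hkq : k + 2 ≤ (q : ℤ)) (x : P) :
    slideQ (k + 2) (fun y => encode k (g y)) x = encode (k + 1) (bkQ q (k + 1) g x) := by
  have hi : (1 : ℤ) ≤ k + 1 := by omega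
  have hiq : (k + 1) + 1 ≤ (q : ℤ) := by omega
  rcases bk_cases q hg hi hiq x with ⟨h1, h2, h3⟩|⟨h1, h2, h3⟩|⟨h1, h2, h3⟩|⟨h1, h2, h3⟩|⟨h1, h2, h3⟩ <;>
      rw [h3] <;> simp only [slideQ] <;> split_ifs with hA hB
  -- case A : g x ∉ {k+1, k+2}
  · exact absurd (encode_none.mp hA.1) h1
  · exact absurd (encode_some2.mp hB.1) (by omega)
  · exact encode_shift h1 (by omega)
  -- case B : g x = k+1, cover above with k+2 exists, bk keeps k+1
  · rw [encode_lt (by omega)]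
    exact congrArg some (by ring)
  · exfalso
    obtain ⟨y, hy, hgy⟩ := h2
    exact hA ⟨encode_none.mpr h1, y, hy, encode_some2.mpr (by omega)⟩
  · exfalso
    obtain ⟨y, hy, hgy⟩ := h2
    exact hA ⟨encode_none.mpr h1, y, hy, encode_some2.mpr (by omega)⟩
  -- case C : g x = k+1, no such cover, bk goes up to k+2
  · exfalso
    obtain ⟨-, y, hy, hgy⟩ := hA
    exact h2 ⟨y, hy, by have := encode_some2.mp hgy; omega⟩
  · exfalso
    rw [encode_none.mpr h1] at hB
    exact nomatch hB.1
  · rw [encode_none.mpr h1, encode_eq_none (by ring)]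
  -- case D : g x = k+2, empty cover below exists, bk keeps k+2
  · exfalso
    rw [encode_some2.mpr (by omega : g x = k + 2)] at hA
    exact nomatch hA.1
  · rw [encode_eq_none (by ring)]
  · exfalso
    obtain ⟨z, hz, hgz⟩ := h2
    exact hB ⟨encode_some2.mpr (by omega), z, hz, encode_none.mpr hgz⟩
  -- case E : g x = k+2, no empty cover below, bk goes down to k+1
  · exfalso
    rw [encode_some2.mpr (by omega : g x = k + 2)] at hA
    exact nomatch hA.1
  · exfalso
    obtain ⟨-, z, hz, hgz⟩ := hB
    exact h2 ⟨z, hz, encode_none.mp hgz⟩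
  · rw [encode_some2.mpr (by omega : g x = k + 2), encode_lt (by omega)]
    exact congrArg some (by ring)

end Aux2


lemma mainInv {P : Type*} [PartialOrder P] [DecidableEq P] (q : ℕ) (f : P → ℤ)
    (hf : IncQ q f) :
    ∀ n : ℕ, n + 1 ≤ q →
      IncQ q ((List.range n).foldl (fun g j => bkQ q ((j : ℤ) + 1) g) f) ∧
      ((List.range n).foldl (fun g j => slideQ ((j : ℤ) + 2) g)
          (fun y => if f y = 1 then none else some (f y))) =
        fun x => encode (n : ℤ)
          (((List.range n).foldl (fun g j => bkQ q ((j : ℤ) + 1) g) f) x) := by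
  have hco : ∀ m : ℕ, (Bind.bind (List.range m)
        (fun a : ℕ => (Pure.pure ((a : ℤ)) : List ℤ)) : List ℤ) =
      (List.range m).map (fun a : ℕ => (a : ℤ)) := fun m => by
    induction List.range m with
    | nil => rfl
    | cons a l ih => simpa [List.flatMap_cons] using ih
  intro n
  induction n with
  | zero =>
    intro _
    rw [hco]
    simp only [List.range_zero, List.map_nil, List.foldl_nil, Nat.cast_zero]
    refine ⟨hf, ?_⟩
    funext y
    have h1 := (hf.1 y).1
    unfold encode
    split_ifs <;> first | rfl | omega | (exfalso; omega)
  | succ n ih =>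
    intro hn
    obtain ⟨hInc, hEq⟩ := ih (by omega)
    rw [hco] at hEq hInc ⊢
    rw [List.range_succ]
    simp only [List.map_append, List.map_cons, List.map_nil, List.foldl_append,
      List.foldl_cons, List.foldl_nil]
    refine ⟨bk_incq q hInc (by omega) (by push_cast at hn ⊢; omega), ?_⟩
    rw [hEq]
    funext x
    have hs := slide_step q hInc (n : ℤ) (by positivity)
      (by push_cast at hn ⊢; omega) x
    push_cast
    exact hs


/-- Bender-Knuth promotion equals jeu de taquin promotion on `Inc_q(P)`. -/
theorem stmt10 {P : Type*} [Fintype P] [PartialOrder P] [DecidableEq P]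
    (q : ℕ) (hq : 0 < q) (f : P → ℤ) (hf : IncQ q f) :
    proQ q f = jdtProQ q f := by
  obtain ⟨hInc, hEq⟩ := mainInv q f hf (q - 1) (by omega)
  funext x
  unfold proQ jdtProQ
  simp only [hEq]
  have hbx := hInc.1 x
  by_cases hx : (List.range (q - 1)).foldl (fun g j => bkQ q ((j : ℤ) + 1) g) f x = (q : ℤ)
  · rw [encode_eq_none (by omega)]
    simp only [Option.getD_none]
    omega
  · rw [encode_lt (by omega)]
    simp only [Option.getD_some]
    omega
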